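/- arXiv:2005.04198 — 2 statements merged into one kernel-verified Lean document; each statement's English description precedes it below -/
import Mathlib

section
/- Let G = (V,E) be a finite graph with neighborhood independence bounded by a constant c (i.e., every independent set contained in the neighborhood of any vertex has size at most c), and suppose every vertex has degree at least K. If every vertex v selects the K neighbors that immediately succeed v in the circular ordering of the closed neighborhood of v by vertex IDs, then every vertex is selected by at most c·K vertices. -/
/-- `x` lies cyclically strictly between `a` and `b` (IDs in `ℕ`, wrapping around). -/
def cyclBetween (a b x : ℕ) : Prop :=
  if a < b then a < x ∧ x < b else (a < x ∨ x < b)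

instance (a b x : ℕ) : Decidable (cyclBetween a b x) := by
  unfold cyclBetween; infer_instance

/-- Under the `K`-Next-Modulo rule, vertex `w` selects vertex `v` iff `v` is a neighbor of `w`
and fewer than `K` members of the (closed) neighborhood of `w` lie cyclically strictly between
`w` and `v` in the ordering by IDs; i.e. `v` is among the `K` neighbors that immediately
succeed `w` in the circular ID-ordering of `N[w]`. -/
def selects {V : Type*} [Fintype V] [DecidableEq V] (G : SimpleGraph V) [DecidableRel G.Adj]
    (id_ : V → ℕ) (K : ℕ) (w v : V) : Prop :=
  G.Adj w v ∧
    ((G.neighborFinset w).filter (fun u => cyclBetween (id_ w) (id_ v) (id_ u))).card < K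

instance {V : Type*} [Fintype V] [DecidableEq V] (G : SimpleGraph V) [DecidableRel G.Adj]
    (id_ : V → ℕ) (K : ℕ) (w v : V) : Decidable (selects G id_ K w v) := by
  unfold selects; infer_instance

/-- Linearization key for the cyclic order starting just after `b`. -/
def cyclKey (b C x : ℕ) : ℕ := if b < x then x else x + C

lemma cyclBetween_of_key_lt {b C a x : ℕ} (_haC : a < C) (hxC : x < C)
    (hab : a ≠ b) (hxb : x ≠ b) (h : cyclKey b C a < cyclKey b C x) :
    cyclBetween a b x := by
  unfold cyclKey at h
  unfold cyclBetween
  rcases lt_or_gt_of_ne hab with h1 | h1 <;> rcases lt_or_gt_of_ne hxb with h2 | h2 <;>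
    simp [not_lt.mpr (le_of_lt h1), not_lt.mpr (le_of_lt h2), h1, h2] at h ⊢ <;> omega

/-- Greedy construction of an independent set hitting a `1/K` fraction of `T`. -/
lemma exists_indep_of_selectors {V : Type*} [Fintype V] [DecidableEq V]
    (G : SimpleGraph V) [DecidableRel G.Adj] (id_ : V → ℕ) (hid : Function.Injective id_)
    (K : ℕ) (v : V) (T : Finset V) (hT : ∀ w ∈ T, selects G id_ K w v) :
    ∃ s : Finset V, s ⊆ T ∧ (∀ a ∈ s, ∀ b ∈ s, ¬ G.Adj a b) ∧ T.card ≤ s.card * K := by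
  set C : ℕ := (Finset.univ.sup id_) + 1 with hC
  have hidC : ∀ x : V, id_ x < C := fun x =>
    Nat.lt_succ_of_le (Finset.le_sup (Finset.mem_univ x))
  revert hT
  induction T using Finset.strongInduction with
  | _ T ih =>
  intro hT
  rcases Finset.eq_empty_or_nonempty T with rfl | hne
  · exact ⟨∅, Finset.Subset.refl _, by simp, by simp⟩
  · obtain ⟨w, hwT, hwmin⟩ := Finset.exists_min_image T (fun x => cyclKey (id_ v) C (id_ x)) hne
    have hwv : G.Adj w v := (hT w hwT).1
    have hwvne : w ≠ v := G.ne_of_adj hwv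
    set A : Finset V := T.filter (fun x => G.Adj w x) with hA
    have hAsub : A ⊆ (G.neighborFinset w).filter
        (fun u => cyclBetween (id_ w) (id_ v) (id_ u)) := by
      intro x hx
      rw [hA, Finset.mem_filter] at hx
      obtain ⟨hxT, hadj⟩ := hx
      have hxw : x ≠ w := fun h => G.loopless.irrefl w (h ▸ hadj)
      have hxv : x ≠ v := G.ne_of_adj ((hT x hxT).1)
      have hkey : cyclKey (id_ v) C (id_ w) < cyclKey (id_ v) C (id_ x) := by
        have hle := hwmin x hxT
        have hne' : cyclKey (id_ v) C (id_ w) ≠ cyclKey (id_ v) C (id_ x) := by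
          intro h
          have h1 := hidC w
          have h2 := hidC x
          unfold cyclKey at h
          apply hxw
          apply hid
          split_ifs at h <;> omega
        omega
      refine Finset.mem_filter.mpr ⟨?_, ?_⟩
      · exact (G.mem_neighborFinset w x).mpr hadj
      · exact cyclBetween_of_key_lt (hidC w) (hidC x)
          (fun h => hwvne (hid h)) (fun h => hxv (hid h)) hkey
    have hAcard : A.card < K := lt_of_le_of_lt (Finset.card_le_card hAsub) (hT w hwT).2
    set T' : Finset V := T \ insert w A with hT'
    have hwT' : w ∉ T' := by simp [hT']
    have hT'sub : T' ⊆ T := Finset.sdiff_subset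
    have hss : T' ⊂ T := Finset.ssubset_iff_of_subset hT'sub |>.mpr ⟨w, hwT, hwT'⟩
    obtain ⟨s', hs'sub, hs'indep, hs'card⟩ := ih T' hss (fun x hx => hT x (hT'sub hx))
    have hws' : w ∉ s' := fun h => hwT' (hs'sub h)
    refine ⟨insert w s', ?_, ?_, ?_⟩
    · intro x hx
      rcases Finset.mem_insert.mp hx with rfl | hx
      · exact hwT
      · exact hT'sub (hs'sub hx)
    · intro a ha b hb
      have key : ∀ x ∈ s', ¬ G.Adj w x := by
        intro x hx hadj
        have hxT' := hs'sub hx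
        rw [hT', Finset.mem_sdiff] at hxT'
        exact hxT'.2 (Finset.mem_insert_of_mem (Finset.mem_filter.mpr ⟨hxT'.1, hadj⟩))
      rcases Finset.mem_insert.mp ha with rfl | ha'
      · rcases Finset.mem_insert.mp hb with rfl | hb'
        · exact G.loopless.irrefl _
        · exact key _ hb'
      · rcases Finset.mem_insert.mp hb with rfl | hb'
        · exact fun hadj => key _ ha' hadj.symm
        · exact hs'indep a ha' b hb' 
    · rw [Finset.card_insert_of_notMem hws']
      have h1 : T.card ≤ T'.card + (insert w A).card := by
        have := Finset.card_le_card_sdiff_add_card (s := T) (t := insert w A)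
        simpa [hT'] using this
      have h2 : (insert w A).card ≤ A.card + 1 := Finset.card_insert_le w A
      have := hs'card
      calc T.card ≤ T'.card + (A.card + 1) := le_trans h1 (by omega)
        _ ≤ s'.card * K + K := by omega
        _ = (s'.card + 1) * K := by ring

/-- In a graph with neighborhood independence at most `c` and minimum degree
at least `K`, if every vertex selects the `K` neighbors that immediately succeed it in the
circular ID-ordering of its closed neighborhood, then every vertex is selected by at most
`c * K` vertices. -/
theorem kNextModulo_load_bound {V : Type*} [Fintype V] [DecidableEq V]
    (G : SimpleGraph V) [DecidableRel G.Adj] (id_ : V → ℕ) (hid : Function.Injective id_)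
    (c K : ℕ)
    (hc : ∀ v : V, ∀ s : Finset V, s ⊆ G.neighborFinset v →
      (∀ a ∈ s, ∀ b ∈ s, ¬ G.Adj a b) → s.card ≤ c)
    (hK : ∀ v : V, K ≤ G.degree v) :
    ∀ v : V, (Finset.univ.filter (fun w => selects G id_ K w v)).card ≤ c * K := by
  intro v
  set T := Finset.univ.filter (fun w => selects G id_ K w v) with hTdef
  have hT : ∀ w ∈ T, selects G id_ K w v := by
    intro w hw
    exact (Finset.mem_filter.mp hw).2
  obtain ⟨s, hsub, hindep, hcard⟩ := exists_indep_of_selectors G id_ hid K v T hT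
  have hsN : s ⊆ G.neighborFinset v := by
    intro x hx
    exact (G.mem_neighborFinset v x).mpr ((hT x (hsub hx)).1).symm
  have hsc : s.card ≤ c := hc v s hsN hindep
  exact le_trans hcard (Nat.mul_le_mul_right K hsc)
end

section
/- Let G = (V,E) be a graph with neighborhood independence at most c. In the subgraph G' = (V, E') where E' consists of the edges {v,u} such that u is one of the K neighbors selected by v under the K-Next-Modulo rule, the maximum degree of G' is at most (c+1)·K. -/
lemma cycl_irrefl (a b : ℕ) : ¬ cyclBetween a b b := by
  unfold cyclBetween; split_ifs <;> omega

lemma cycl_total (a b₁ b₂ : ℕ) (h1 : b₁ ≠ a) (h2 : b₂ ≠ a) (h12 : b₁ ≠ b₂) :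
    cyclBetween a b₁ b₂ ∨ cyclBetween a b₂ b₁ := by
  unfold cyclBetween; split_ifs <;> omega

lemma cycl_trans (a b₁ b₂ x : ℕ) (h1 : cyclBetween a b₁ b₂) (h2 : cyclBetween a b₂ x) :
    cyclBetween a b₁ x := by
  unfold cyclBetween at *; split_ifs at * <;> omega

lemma min_cycl (a b b' N : ℕ) (hNb : b < N) (hNb' : b' < N)
    (hab' : b' ≠ a) (hbb' : b ≠ b')
    (hkey : (if a < b then b else b + N) ≤ (if a < b' then b' else b' + N)) :
    cyclBetween b a b' := by
  unfold cyclBetween; split_ifs at * <;> omega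

section Main

variable {V : Type*} [Fintype V] [DecidableEq V] (G : SimpleGraph V) [DecidableRel G.Adj]
  (id_ : V → ℕ)

/-- Each vertex selects fewer than `K` vertices (counted over all `u`). -/
lemma card_selected (hid : Function.Injective id_) (K : ℕ) (v : V) :
    (Finset.univ.filter (fun u => selects G id_ K v u)).card ≤ K := by
  classical
  set f : V → ℕ := fun u =>
    ((G.neighborFinset v).filter (fun u' => cyclBetween (id_ v) (id_ u) (id_ u'))).card with hf
  -- key monotonicity
  have hmono : ∀ u₁ u₂ : V, u₂ ∈ G.neighborFinset v →
      cyclBetween (id_ v) (id_ u₁) (id_ u₂) → f u₂ < f u₁ := by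
    intro u₁ u₂ hmem hcyc
    have hsub : (G.neighborFinset v).filter (fun u' => cyclBetween (id_ v) (id_ u₂) (id_ u')) ⊆
        ((G.neighborFinset v).filter (fun u' => cyclBetween (id_ v) (id_ u₁) (id_ u'))).erase u₂ := by
      intro x hx
      rw [Finset.mem_filter] at hx
      rw [Finset.mem_erase, Finset.mem_filter]
      refine ⟨fun hxe => ?_, hx.1, cycl_trans _ _ _ _ hcyc hx.2⟩
      exact cycl_irrefl (id_ v) (id_ u₂) (hxe ▸ hx.2)
    have hm : u₂ ∈ (G.neighborFinset v).filter
        (fun u' => cyclBetween (id_ v) (id_ u₁) (id_ u')) :=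
      Finset.mem_filter.2 ⟨hmem, hcyc⟩
    calc f u₂ ≤ _ := Finset.card_le_card hsub
    _ < f u₁ := Finset.card_erase_lt_of_mem hm
  apply le_trans (Finset.card_le_card_of_injOn f ?_ ?_) (by simp [Finset.card_range] : (Finset.range K).card ≤ K)
  · intro u hu
    rw [Finset.mem_coe, Finset.mem_filter] at hu
    exact Finset.mem_range.2 hu.2.2
  · intro u₁ h₁ u₂ h₂ hfe
    by_contra hne
    simp only [Finset.coe_filter, Set.mem_setOf_eq] at h₁ h₂
    have hadj₁ : G.Adj v u₁ := h₁.2.1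
    have hadj₂ : G.Adj v u₂ := h₂.2.1
    have hne₁ : id_ u₁ ≠ id_ v := fun h => hadj₁.ne' (hid h)
    have hne₂ : id_ u₂ ≠ id_ v := fun h => hadj₂.ne' (hid h)
    have hne₁₂ : id_ u₁ ≠ id_ u₂ := fun h => hne (hid h)
    rcases cycl_total (id_ v) (id_ u₁) (id_ u₂) hne₁ hne₂ hne₁₂ with h | h
    · exact absurd hfe (Nat.ne_of_gt (hmono u₁ u₂ ((G.mem_neighborFinset v u₂).2 hadj₂) h))
    · exact absurd hfe (Nat.ne_of_gt (hmono u₂ u₁ ((G.mem_neighborFinset v u₁).2 hadj₁) h)).symm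

/-- Greedy bound: selectors of `v` plus an accumulated independent set. -/
lemma greedy (hid : Function.Injective id_) (c K : ℕ)
    (hc : ∀ v : V, ∀ s : Finset V, s ⊆ G.neighborFinset v →
      (∀ a ∈ s, ∀ b ∈ s, ¬ G.Adj a b) → s.card ≤ c)
    (v : V) :
    ∀ n : ℕ, ∀ S T : Finset V, S.card ≤ n →
      (∀ w ∈ S, selects G id_ K w v) →
      T ⊆ G.neighborFinset v →
      (∀ t ∈ T, t ∉ S) →
      (∀ t₁ ∈ T, ∀ t₂ ∈ T, ¬ G.Adj t₁ t₂) →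
      (∀ t ∈ T, ∀ s ∈ S, ¬ G.Adj t s) →
      S.card + T.card * K ≤ c * K := by
  classical
  intro n
  induction n with
  | zero =>
    intro S T hcard hsel hTsub hTS hTind hTSadj
    have : S.card = 0 := Nat.le_zero.1 hcard
    rw [this, Nat.zero_add]
    exact Nat.mul_le_mul_right K (hc v T hTsub hTind)
  | succ n ih =>
    intro S T hcard hsel hTsub hTS hTind hTSadj
    by_cases hS : S = ∅
    · subst hS
      simp only [Finset.card_empty, Nat.zero_add]
      exact Nat.mul_le_mul_right K (hc v T hTsub hTind)
    · obtain ⟨w₀, hw₀⟩ := Finset.nonempty_iff_ne_empty.2 hS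
      set N : ℕ := (Finset.univ.sup id_) + 1 with hN
      have hidN : ∀ x : V, id_ x < N :=
        fun x => Nat.lt_succ_of_le (Finset.le_sup (Finset.mem_univ x))
      set key : V → ℕ := fun w => if id_ v < id_ w then id_ w else id_ w + N with hkey
      obtain ⟨w, hwS, hwmin⟩ := Finset.exists_min_image S key ⟨w₀, hw₀⟩
      have hwsel := hsel w hwS
      -- all other elements of S lie cyclically between w and v
      have hbetween : ∀ s ∈ S, s ≠ w → cyclBetween (id_ w) (id_ v) (id_ s) := by
        intro s hsS hsw
        have hsel' := hsel s hsS
        apply min_cycl (id_ v) (id_ w) (id_ s) N (hidN w) (hidN s)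
        · exact fun h => (hsel'.1.ne (hid h)).elim
        · exact fun h => hsw (hid h).symm
        · exact hwmin s hsS
      -- split S
      set S' : Finset V := S.filter (fun s => ¬ (s = w ∨ G.Adj w s)) with hS'
      set R : Finset V := S.filter (fun s => s = w ∨ G.Adj w s) with hR
      have hsplit : R.card + S'.card = S.card := Finset.card_filter_add_card_filter_not _
      have hRK : R.card ≤ K := by
        have hsub : R ⊆ insert w ((G.neighborFinset w).filter
            (fun u => cyclBetween (id_ w) (id_ v) (id_ u))) := by
          intro s hs
          rw [hR, Finset.mem_filter] at hs
          rcases hs.2 with rfl | hadj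
          · exact Finset.mem_insert_self _ _
          · refine Finset.mem_insert_of_mem (Finset.mem_filter.2
              ⟨(G.mem_neighborFinset w s).2 hadj, hbetween s hs.1 hadj.ne'⟩)
        calc R.card ≤ _ := Finset.card_le_card hsub
        _ ≤ _ + 1 := Finset.card_insert_le _ _
        _ ≤ K := hwsel.2
      have hwR : w ∈ R := Finset.mem_filter.2 ⟨hwS, Or.inl rfl⟩
      have hS'n : S'.card ≤ n := by
        have : 1 ≤ R.card := Finset.card_pos.2 ⟨w, hwR⟩
        omega
      have hwT : w ∉ T := fun h => hTS w h hwS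
      have hwNv : w ∈ G.neighborFinset v := (G.mem_neighborFinset v w).2 hwsel.1.symm
      have hih := ih S' (insert w T) hS'n
        (fun s hs => hsel s (Finset.mem_of_mem_filter s hs))
        (by
          intro t ht
          rcases Finset.mem_insert.1 ht with rfl | ht'
          · exact hwNv
          · exact hTsub ht')
        (by
          intro t ht htS'
          rw [hS', Finset.mem_filter] at htS'
          rcases Finset.mem_insert.1 ht with rfl | ht'
          · exact htS'.2 (Or.inl rfl)
          · exact hTS t ht' htS'.1)
        (by
          intro t₁ ht₁ t₂ ht₂
          rcases Finset.mem_insert.1 ht₁ with rfl | h₁ <;>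
            rcases Finset.mem_insert.1 ht₂ with rfl | h₂
          · exact G.irrefl
          · exact fun h => hTSadj t₂ h₂ t₁ hwS h.symm
          · exact fun h => hTSadj t₁ h₁ t₂ hwS h
          · exact hTind t₁ h₁ t₂ h₂)
        (by
          intro t ht s hs
          rw [hS', Finset.mem_filter] at hs
          rcases Finset.mem_insert.1 ht with rfl | ht'
          · exact fun h => hs.2 (Or.inr h)
          · exact hTSadj t ht' s hs.1)
      rw [Finset.card_insert_of_notMem hwT] at hih
      have hScard : S.card = S'.card + R.card := by omega
      calc S.card + T.card * K = S'.card + R.card + T.card * K := by rw [hScard]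
      _ ≤ S'.card + K + T.card * K := by omega
      _ = S'.card + (T.card + 1) * K := by ring
      _ ≤ c * K := hih

lemma card_selectors (hid : Function.Injective id_) (c K : ℕ)
    (hc : ∀ v : V, ∀ s : Finset V, s ⊆ G.neighborFinset v →
      (∀ a ∈ s, ∀ b ∈ s, ¬ G.Adj a b) → s.card ≤ c)
    (v : V) :
    (Finset.univ.filter (fun u => selects G id_ K u v)).card ≤ c * K := by
  classical
  have := greedy G id_ hid c K hc v
    (Finset.univ.filter (fun u => selects G id_ K u v)).card
    (Finset.univ.filter (fun u => selects G id_ K u v)) ∅ le_rfl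
    (fun w hw => (Finset.mem_filter.1 hw).2)
    (Finset.empty_subset _)
    (by simp) (by simp) (by simp)
  simpa using this

end Main

/-- In the selection subgraph `G' = (V,E')`, where `{v,u} ∈ E'` iff `u` is one
of the `K` neighbors selected by `v` under the `K`-Next-Modulo rule, the maximum degree is at
most `(c+1)·K` (each vertex selects `K` vertices and is selected by at most `c·K` vertices). -/
theorem selection_subgraph_maxDegree {V : Type*} [Fintype V] [DecidableEq V]
    (G : SimpleGraph V) [DecidableRel G.Adj] (id_ : V → ℕ) (hid : Function.Injective id_)
    (c K : ℕ)
    (hc : ∀ v : V, ∀ s : Finset V, s ⊆ G.neighborFinset v →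
      (∀ a ∈ s, ∀ b ∈ s, ¬ G.Adj a b) → s.card ≤ c)
    (hK : ∀ v : V, K ≤ G.degree v) :
    ∀ v : V,
      (Finset.univ.filter
        (fun u => u ≠ v ∧ (selects G id_ K v u ∨ selects G id_ K u v))).card ≤ (c + 1) * K := by
  classical
  intro v
  have hsub : Finset.univ.filter
      (fun u => u ≠ v ∧ (selects G id_ K v u ∨ selects G id_ K u v)) ⊆
      (Finset.univ.filter (fun u => selects G id_ K v u)) ∪
      (Finset.univ.filter (fun u => selects G id_ K u v)) := by
    intro u hu
    rw [Finset.mem_filter] at hu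
    rcases hu.2.2 with h | h
    · exact Finset.mem_union_left _ (Finset.mem_filter.2 ⟨Finset.mem_univ u, h⟩)
    · exact Finset.mem_union_right _ (Finset.mem_filter.2 ⟨Finset.mem_univ u, h⟩)
  calc _ ≤ _ := Finset.card_le_card hsub
  _ ≤ _ + _ := Finset.card_union_le _ _
  _ ≤ K + c * K := Nat.add_le_add (card_selected G id_ hid K v)
      (card_selectors G id_ hid c K hc v)
  _ = (c + 1) * K := by ring
end
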